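/- If R : X ↔ 𝒫Y is inner univalent, then for any multirelation S : Y ↔ 𝒫Z, the Peleg composition decomposes as R ∗ S = (α(R) ; S) ∪ τ(R), and consequently α(R ∗ S) = α(R) ; α(S). Furthermore, Peleg composition of inner univalent multirelations is inner univalent and associative on inner univalent multirelations. -/
import Mathlib


universe u v w x

variable {X : Type u} {Y : Type v} {Z : Type w} {W : Type x}

/-- Relational composition. -/
def rcomp (R : Set (X × Y)) (S : Set (Y × Z)) : Set (X × Z) :=
  {p | ∃ b, (p.1, b) ∈ R ∧ (b, p.2) ∈ S}

/-- Power transpose Λ. -/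
def Lam (R : Set (X × Y)) : Set (X × Set Y) :=
  {p | p.2 = {b | (p.1, b) ∈ R}}

/-- α : postcomposition with the has-element relation. -/
def alphaM (S : Set (X × Set Y)) : Set (X × Y) :=
  {p | ∃ B, (p.1, B) ∈ S ∧ p.2 ∈ B}

/-- η : singleton embedding. -/
def etaM (R : Set (X × Y)) : Set (X × Set Y) :=
  {p | ∃ b, (p.1, b) ∈ R ∧ p.2 = {b}}

/-- Peleg composition. -/
def peleg (R : Set (X × Set Y)) (S : Set (Y × Set Z)) : Set (X × Set Z) :=
  {p | ∃ B, (p.1, B) ∈ R ∧ ∃ f : Y → Set Z, (∀ b ∈ B, (b, f b) ∈ S) ∧ p.2 = ⋃ b ∈ B, f b}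

/-- Outer deterministic: each element relates to exactly one set. -/
def OuterDet (R : Set (X × Set Y)) : Prop := ∀ a, ∃! B, (a, B) ∈ R

/-- Inner deterministic: every related set is a singleton. -/
def InnerDet (R : Set (X × Set Y)) : Prop := ∀ a B, (a, B) ∈ R → ∃ b, B = {b}

/-- Inner univalent: every related set is empty or a singleton. -/
def InnerUniv (R : Set (X × Set Y)) : Prop := ∀ a B, (a, B) ∈ R → B = ∅ ∨ ∃ b, B = {b}

/-- The unit 1_X. -/
def oneM (X : Type u) : Set (X × Set X) := {p | p.2 = {p.1}}

/-- Identity relation. -/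
def idR (X : Type u) : Set (X × X) := {p | p.1 = p.2}

/-- Hoare preorder ⊑↓. -/
def hle (R S : Set (X × Set Y)) : Prop := ∀ a A, (a, A) ∈ R → ∃ B, (a, B) ∈ S ∧ A ⊆ B

/-- Smyth preorder ⊑↑. -/
def sle (P Q : Set (X × Set Y)) : Prop := ∀ a B, (a, B) ∈ Q → ∃ A, (a, A) ∈ P ∧ A ⊆ B

/-- Down-closure. -/
def downCl (R : Set (X × Set Y)) : Set (X × Set Y) := {p | ∃ B, (p.1, B) ∈ R ∧ p.2 ⊆ B}

/-- Atoms: pairs whose second component is a singleton. -/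
def atomsM (X : Type u) (Y : Type v) : Set (X × Set Y) := {p | ∃ b, p.2 = {b}}

/-- Terminal part τ(R). -/
def tauM (R : Set (X × Set Y)) : Set (X × Set Y) := {p ∈ R | p.2 = ∅}

/-- Terminal part of R viewed as a multirelation into any other powerset. -/
def tauAs (R : Set (X × Set Y)) : Set (X × Set Z) := {p | (p.1, (∅ : Set Y)) ∈ R ∧ p.2 = ∅}

/-- Outer determinisation (fusion). -/
def deltaO (R : Set (X × Set Y)) : Set (X × Set Y) := Lam (alphaM R)

/-- Inner determinisation (fission). -/
def deltaI (R : Set (X × Set Y)) : Set (X × Set Y) := etaM (alphaM R)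


lemma peleg_decomp (R : Set (X × Set Y)) (S : Set (Y × Set Z)) (hR : InnerUniv R) :
    peleg R S = rcomp (alphaM R) S ∪ tauAs R := by
  ext ⟨a, C⟩
  simp only [peleg, rcomp, tauAs, alphaM, Set.mem_setOf_eq, Set.mem_union]
  constructor
  · rintro ⟨B, hB, f, hf, rfl⟩
    rcases hR a B hB with rfl | ⟨b, rfl⟩
    · right; simpa using hB
    · left; exact ⟨b, ⟨{b}, hB, rfl⟩, by simpa using hf b rfl⟩
  · rintro (⟨b, ⟨B, hB, hbB⟩, hC⟩ | ⟨h, rfl⟩)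
    · rcases hR a B hB with rfl | ⟨c, rfl⟩
      · exact absurd hbB (Set.notMem_empty b)
      · obtain rfl : b = c := hbB
        exact ⟨{b}, hB, fun _ => C, by simpa using hC, by simp⟩
    · exact ⟨∅, h, fun _ => ∅, by simp, by simp⟩

lemma alphaM_peleg (R : Set (X × Set Y)) (S : Set (Y × Set Z)) (hR : InnerUniv R) :
    alphaM (peleg R S) = rcomp (alphaM R) (alphaM S) := by
  rw [peleg_decomp R S hR]
  ext ⟨a, c⟩
  simp only [alphaM, rcomp, tauAs, Set.mem_setOf_eq, Set.mem_union]
  constructor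
  · rintro ⟨C, (⟨b, hb, hbC⟩ | ⟨_, rfl⟩), hc⟩
    · exact ⟨b, hb, C, hbC, hc⟩
    · exact absurd hc (Set.notMem_empty c)
  · rintro ⟨b, hb, C, hbC, hc⟩
    exact ⟨C, Or.inl ⟨b, hb, hbC⟩, hc⟩

lemma innerUniv_peleg (R : Set (X × Set Y)) (S : Set (Y × Set Z)) (hR : InnerUniv R)
    (hS : InnerUniv S) : InnerUniv (peleg R S) := by
  rw [peleg_decomp R S hR]
  rintro a C (⟨b, _, hbC⟩ | ⟨_, rfl⟩)
  · exact hS b C hbC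
  · exact Or.inl rfl

lemma tauAs_peleg (R : Set (X × Set Y)) (S : Set (Y × Set Z)) (hR : InnerUniv R) :
    (tauAs (peleg R S) : Set (X × Set W)) = rcomp (alphaM R) (tauAs S) ∪ tauAs R := by
  rw [peleg_decomp R S hR]
  ext ⟨a, C⟩
  simp only [tauAs, rcomp, Set.mem_setOf_eq, Set.mem_union]
  aesop

lemma rcomp_assoc (R : Set (X × Y)) (S : Set (Y × Z)) (T : Set (Z × W)) :
    rcomp (rcomp R S) T = rcomp R (rcomp S T) := by
  ext ⟨a, d⟩
  simp only [rcomp, Set.mem_setOf_eq]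
  tauto

lemma rcomp_union (R : Set (X × Y)) (S T : Set (Y × Z)) :
    rcomp R (S ∪ T) = rcomp R S ∪ rcomp R T := by
  ext ⟨a, c⟩
  simp only [rcomp, Set.mem_setOf_eq, Set.mem_union]
  constructor
  · rintro ⟨b, h1, (h2 | h2)⟩
    · exact Or.inl ⟨b, h1, h2⟩
    · exact Or.inr ⟨b, h1, h2⟩
  · rintro (⟨b, h1, h2⟩ | ⟨b, h1, h2⟩)
    · exact ⟨b, h1, Or.inl h2⟩
    · exact ⟨b, h1, Or.inr h2⟩

theorem stmt18 (R : Set (X × Set Y)) (S : Set (Y × Set Z)) (T : Set (Z × Set W))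
    (hR : InnerUniv R) :
    peleg R S = rcomp (alphaM R) S ∪ tauAs R ∧
    alphaM (peleg R S) = rcomp (alphaM R) (alphaM S) ∧
    (InnerUniv S → InnerUniv (peleg R S)) ∧
    (InnerUniv S → InnerUniv T → peleg (peleg R S) T = peleg R (peleg S T)) := by
  refine ⟨peleg_decomp R S hR, alphaM_peleg R S hR, fun hS => innerUniv_peleg R S hR hS,
    fun hS hT => ?_⟩
  rw [peleg_decomp (peleg R S) T (innerUniv_peleg R S hR hS), alphaM_peleg R S hR,
    tauAs_peleg R S hR, peleg_decomp R (peleg S T) hR, peleg_decomp S T hS,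
    rcomp_union, rcomp_assoc, Set.union_assoc]
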